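/- Let X = Y ⊕ ℝh, Ω ⊆ X open convex with 0 ∈ Ω, p its Minkowski functional, and f : Ω_h → ℝ the finite concave upper-slice function with graph Γ(f) ⊆ ∂Ω. If f is Gâteaux differentiable at y₀ ∈ Ω_h and x₀ = y₀ + f(y₀) h, then p is Gâteaux differentiable at x₀ and its Gâteaux derivative is the functional x ↦ ((−D_G f(y₀))(y) + t) / ((−D_G f(y₀))(y₀) + f(y₀)), where x = y + t h with y ∈ Y, t = h*(x). -/

import Mathlib

open Filter Set Topology Asymptotics Pointwise

set_option maxHeartbeats 1000000


/-- Setting: `X = Y ⊕ ℝh` with `Y = ker h*`, `h*(h) = 1`; `Ω ⊆ X` open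
convex with `0 ∈ Ω`, `p = gauge Ω` its Minkowski functional, and
`f(y) = sup {t : y + t h ∈ Ω}` the finite concave upper-slice function on `Ω_h`, whose
graph lies in `∂Ω`. If `f` is Gâteaux differentiable at `y₀ ∈ Ω_h`, with Gâteaux
derivative `L = D_G f(y₀)` (along directions of `Y`), and `x₀ = y₀ + f(y₀) h`, then `p`
is Gâteaux differentiable at `x₀` with Gâteaux derivative
`x = y + t h ↦ ((−L)(y) + t) / ((−L)(y₀) + f(y₀))`, where `y = x − h*(x) h`,
`t = h*(x)`. -/
theorem gauge_gateaux_derivative_at_graph_point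
    {X : Type*} [NormedAddCommGroup X] [NormedSpace ℝ X]
    (hstar : X →L[ℝ] ℝ) (h : X) (hh : hstar h = 1)
    (Ω : Set X) (hΩopen : IsOpen Ω) (hΩconv : Convex ℝ Ω) (h0 : (0 : X) ∈ Ω)
    (hfin : ∀ y : X, (hstar y = 0 ∧ ∃ t : ℝ, y + t • h ∈ Ω) →
      BddAbove {t : ℝ | y + t • h ∈ Ω})
    (y₀ : X) (hy₀ : hstar y₀ = 0 ∧ ∃ t : ℝ, y₀ + t • h ∈ Ω)
    (L : X →L[ℝ] ℝ)
    (hGateaux : ∀ v : X, hstar v = 0 →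
      HasDerivAt (fun t : ℝ => sSup {s : ℝ | (y₀ + t • v) + s • h ∈ Ω}) (L v) 0) :
    ∀ v : X, HasDerivAt
      (fun s : ℝ => gauge Ω ((y₀ + sSup {t : ℝ | y₀ + t • h ∈ Ω} • h) + s • v))
      ((-(L (v - hstar v • h)) + hstar v) /
        (-(L y₀) + sSup {t : ℝ | y₀ + t • h ∈ Ω})) 0 := by
  intro v
  obtain ⟨hy₀0, ty, hty⟩ := hy₀
  set vt : ℝ := hstar v with hvt
  set vY : X := v - hstar v • h with hvYdef
  have hvY0 : hstar vY = 0 := by simp [hvYdef, hh]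
  set t₀ : ℝ := sSup {t : ℝ | y₀ + t • h ∈ Ω} with ht₀
  have hne₀ : {t : ℝ | y₀ + t • h ∈ Ω}.Nonempty := ⟨ty, hty⟩
  have hbdd₀ : BddAbove {t : ℝ | y₀ + t • h ∈ Ω} := hfin y₀ ⟨hy₀0, ty, hty⟩
  -- slices are convex
  have hSconv : ∀ y : X, Convex ℝ {t : ℝ | y + t • h ∈ Ω} := by
    intro y a ha b hb α β hα hβ hab
    have hm := hΩconv ha hb hα hβ hab
    simp only [Set.mem_setOf_eq, smul_eq_mul] at *
    have he : α • (y + a • h) + β • (y + b • h) = (α + β) • y + (α * a + β * b) • h := by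
      module
    rw [he, hab, one_smul] at hm
    exact hm
  -- convex combination of slice points
  have hcombo : ∀ (w : X) (θ ra rb : ℝ), 0 ≤ θ → θ ≤ 1 →
      y₀ + ra • h ∈ Ω → (y₀ + w) + rb • h ∈ Ω →
      (y₀ + θ • w) + ((1 - θ) * ra + θ * rb) • h ∈ Ω := by
    intro w θ ra rb h1 h2 ha hb
    have hm := hΩconv ha hb (by linarith : (0:ℝ) ≤ 1 - θ) h1 (by ring)
    have he : (1 - θ) • (y₀ + ra • h) + θ • ((y₀ + w) + rb • h)
        = (y₀ + θ • w) + ((1 - θ) * ra + θ * rb) • h := by module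
    rwa [he] at hm
  -- concavity upper bound via the Gateaux derivative
  have key_ub : ∀ w : X, hstar w = 0 → {t : ℝ | (y₀ + w) + t • h ∈ Ω}.Nonempty →
      sSup {t : ℝ | (y₀ + w) + t • h ∈ Ω} ≤ t₀ + L w := by
    intro w hw0 hne
    refine csSup_le hne ?_
    intro b hb
    have hb' : (y₀ + w) + b • h ∈ Ω := hb
    -- slope lower bound on (0,1]
    have hslope : ∀ θ : ℝ, θ ∈ Set.Ioc (0:ℝ) 1 →
        b - t₀ ≤ slope (fun t : ℝ => sSup {s : ℝ | (y₀ + t • w) + s • h ∈ Ω}) 0 θ := by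
      intro θ hθ
      obtain ⟨hθ0, hθ1⟩ := hθ
      have hF0 : sSup {s : ℝ | (y₀ + (0:ℝ) • w) + s • h ∈ Ω} = t₀ := by
        rw [ht₀]; norm_num
      rw [slope_def_field, hF0, sub_zero, le_div_iff₀ hθ0]
      -- suffices : (1-θ)*t₀ + θ*b ≤ F θ
      have hkey : (1 - θ) * t₀ + θ * b ≤ sSup {s : ℝ | (y₀ + θ • w) + s • h ∈ Ω} := by
        refine le_of_forall_pos_le_add ?_
        intro ε hε
        obtain ⟨ra, hra, hralt⟩ := exists_lt_of_lt_csSup hne₀ (show t₀ - ε < t₀ by linarith)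
        have hmem := hcombo w θ ra b hθ0.le hθ1 hra hb'
        have hle : (1 - θ) * ra + θ * b ≤ sSup {s : ℝ | (y₀ + θ • w) + s • h ∈ Ω} := by
          refine le_csSup (hfin _ ⟨by simp [hy₀0, hw0], ⟨_, hmem⟩⟩) hmem
        have hra' : t₀ ≤ ra + ε := by linarith
        nlinarith
      nlinarith
    have htend : Tendsto (slope (fun t : ℝ => sSup {s : ℝ | (y₀ + t • w) + s • h ∈ Ω}) 0)
        (𝓝[>] (0:ℝ)) (𝓝 (L w)) := by
      refine (hasDerivAt_iff_tendsto_slope.mp (hGateaux w hw0)).mono_left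
        (nhdsWithin_mono _ ?_)
      intro x hx
      exact ne_of_gt hx
    have hle : b - t₀ ≤ L w := by
      refine ge_of_tendsto htend ?_
      filter_upwards [Ioc_mem_nhdsGT_of_mem (Set.mem_Ico.mpr ⟨le_refl 0, zero_lt_one⟩)]
        with θ hθ
      exact hslope θ hθ
    linarith
  have hc : 0 < t₀ - L y₀ := by
    have hub := key_ub (-y₀) (by simp [hy₀0]) ⟨0, by simpa using h0⟩
    have hub2 : sSup {t : ℝ | t • h ∈ Ω} + L y₀ ≤ t₀ := by simpa using hub
    have hcont : ContinuousAt (fun t : ℝ => t • h) 0 := by fun_prop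
    have hev := (hcont.eventually_mem (hΩopen.mem_nhds (by simpa using h0))).filter_mono
      (nhdsWithin_le_nhds (s := Set.Ioi (0:ℝ)))
    obtain ⟨t, htΩ, htpos⟩ := (hev.and eventually_mem_nhdsWithin).exists
    have htpos' : (0:ℝ) < t := htpos
    have hbddz : BddAbove {t : ℝ | t • h ∈ Ω} := by
      simpa using hfin 0 ⟨by simp, ⟨t, by simpa using htΩ⟩⟩
    have hle : t ≤ sSup {t : ℝ | t • h ∈ Ω} := le_csSup hbddz htΩ
    linarith
  have hnotmem : y₀ + t₀ • h ∉ Ω := by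
    intro hmem
    have hcont : ContinuousAt (fun t : ℝ => y₀ + t • h) t₀ := by fun_prop
    have hev := (hcont.eventually_mem (hΩopen.mem_nhds hmem)).filter_mono
      (nhdsWithin_le_nhds (s := Set.Ioi t₀))
    obtain ⟨t, htΩ, htgt⟩ := (hev.and eventually_mem_nhdsWithin).exists
    exact absurd (le_csSup hbdd₀ htΩ) (not_le.mpr htgt)
  have hty_lt : ty < t₀ := lt_of_le_of_ne (le_csSup hbdd₀ hty) fun he => hnotmem (he ▸ hty)
  have hx₀cl : y₀ + t₀ • h ∈ closure Ω := by
    rw [Metric.mem_closure_iff]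
    intro ε hε
    have hδ : 0 < ε / (‖h‖ + 1) := by positivity
    obtain ⟨t, htmem, htlt⟩ := exists_lt_of_lt_csSup hne₀
      (show t₀ - ε / (‖h‖ + 1) < t₀ by linarith)
    refine ⟨y₀ + t • h, htmem, ?_⟩
    have hle : t ≤ t₀ := le_csSup hbdd₀ htmem
    rw [dist_eq_norm, show (y₀ + t₀ • h) - (y₀ + t • h) = (t₀ - t) • h by module,
      norm_smul, Real.norm_eq_abs, abs_of_nonneg (by linarith)]
    have hεeq : (ε / (‖h‖ + 1)) * (‖h‖ + 1) = ε := by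
      field_simp
    nlinarith [norm_nonneg h]
  have habs : ∀ x : X, ∃ r : ℝ, 0 < r ∧ x ∈ r • Ω := by
    intro x
    have hcont : ContinuousAt (fun t : ℝ => t • x) 0 := by fun_prop
    have hev := (hcont.eventually_mem (hΩopen.mem_nhds (by simpa using h0))).filter_mono
      (nhdsWithin_le_nhds (s := Set.Ioi (0:ℝ)))
    obtain ⟨t, htΩ, htpos⟩ := (hev.and eventually_mem_nhdsWithin).exists
    have htpos' : (0:ℝ) < t := htpos
    refine ⟨t⁻¹, by positivity, ?_⟩
    rw [Set.mem_smul_set_iff_inv_smul_mem₀ (by positivity), inv_inv]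
    exact htΩ
  have hφle : ∀ (x : X) (b : ℝ), 0 < b → x ∈ b • Ω →
      hstar x - L (x - hstar x • h) ≤ b * (t₀ - L y₀) := by
    intro x b hb hxb
    rw [Set.mem_smul_set_iff_inv_smul_mem₀ (ne_of_gt hb)] at hxb
    set z : X := b⁻¹ • x with hz
    set y : X := z - hstar z • h with hy
    have hy0 : hstar y = 0 := by simp [hy, hh]
    have hmem : (y₀ + (y - y₀)) + hstar z • h ∈ Ω := by
      have : (y₀ + (y - y₀)) + hstar z • h = z := by rw [hy]; module
      rw [this]; exact hxb
    have h3 := key_ub (y - y₀) (by rw [map_sub, hy0, hy₀0, sub_zero]) ⟨hstar z, hmem⟩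
    have h2 : hstar z ≤ sSup {t : ℝ | (y₀ + (y - y₀)) + t • h ∈ Ω} :=
      le_csSup (hfin _ ⟨by simp [hy0, hy₀0], ⟨hstar z, hmem⟩⟩) hmem
    have hkey : hstar z - L y ≤ t₀ - L y₀ := by
      have := h2.trans h3
      rw [map_sub] at this
      linarith
    have hx : x = b • z := by
      rw [hz, smul_smul, mul_inv_cancel₀ (ne_of_gt hb), one_smul]
    have e1 : hstar x = b * hstar z := by rw [hx, map_smul, smul_eq_mul]
    have e2 : x - hstar x • h = b • y := by rw [e1, hx, hy]; module
    rw [e2, e1, show L (b • y) = b * L y from by rw [map_smul, smul_eq_mul]]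
    calc b * hstar z - b * L y = b * (hstar z - L y) := by ring
      _ ≤ b * (t₀ - L y₀) := mul_le_mul_of_nonneg_left hkey hb.le
  have hlow : ∀ s : ℝ, 1 + s * ((vt - L vY) / (t₀ - L y₀)) ≤
      gauge Ω ((y₀ + t₀ • h) + s • v) := by
    intro s
    obtain ⟨r₀, hr₀, hr₀mem⟩ := habs ((y₀ + t₀ • h) + s • v)
    rw [gauge]
    refine le_csInf ⟨r₀, hr₀, hr₀mem⟩ ?_
    rintro b ⟨hb0, hbmem⟩
    have hb1 := hφle _ b hb0 hbmem
    have e1 : hstar ((y₀ + t₀ • h) + s • v) = t₀ + s * vt := by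
      simp [hy₀0, hh, hvt]
    have e2 : ((y₀ + t₀ • h) + s • v) - (t₀ + s * vt) • h = y₀ + s • vY := by
      rw [hvYdef, hvt]; module
    rw [e1, e2, map_add, map_smul, smul_eq_mul] at hb1
    rw [show (1:ℝ) + s * ((vt - L vY) / (t₀ - L y₀))
        = ((t₀ - L y₀) + s * (vt - L vY)) / (t₀ - L y₀) by field_simp]
    rw [div_le_iff₀ hc]
    linarith
  have hG0 : gauge Ω (y₀ + t₀ • h) = 1 := by
    have hle1 : ∀ b : ℝ, 1 < b → gauge Ω (y₀ + t₀ • h) ≤ b := by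
      intro b hb
      refine gauge_le_of_mem (by linarith) ?_
      rw [Set.mem_smul_set_iff_inv_smul_mem₀ (by positivity : b ≠ 0)]
      have hbinv : (0:ℝ) < b⁻¹ := by positivity
      have hbinv1 : b⁻¹ < 1 := by
        rw [inv_lt_one_iff₀]; right; exact hb
      have hcb := hΩconv.combo_interior_closure_mem_interior
        (x := 0) (y := y₀ + t₀ • h) (a := 1 - b⁻¹) (b := b⁻¹)
        (by rw [hΩopen.interior_eq]; exact h0) hx₀cl (by linarith) hbinv.le (by ring)
      rw [hΩopen.interior_eq] at hcb
      simpa using hcb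
    have hge : 1 ≤ gauge Ω (y₀ + t₀ • h) := by simpa using hlow 0
    refine le_antisymm ?_ hge
    by_contra hgt
    push_neg at hgt
    have := hle1 ((1 + gauge Ω (y₀ + t₀ • h)) / 2) (by linarith)
    linarith
  have hψder : ∀ κ : ℝ, HasDerivAt (fun s : ℝ =>
      (1 + κ * s) * sSup {r : ℝ | (y₀ + (s / (1 + κ * s)) • (vY - κ • y₀)) + r • h ∈ Ω}
        - (t₀ + s * vt)) (κ * (t₀ - L y₀) - (vt - L vY)) 0 := by
    intro κ
    have hd0 : hstar (vY - κ • y₀) = 0 := by simp [hvY0, hy₀0]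
    have hq : HasDerivAt (fun s : ℝ => s / (1 + κ * s)) 1 0 := by
      have h1 : HasDerivAt (fun s : ℝ => s) 1 0 := hasDerivAt_id 0
      have h2 : HasDerivAt (fun s : ℝ => 1 + κ * s) κ 0 := by
        simpa using ((hasDerivAt_id 0).const_mul κ).const_add 1
      have := h1.div h2 (by norm_num)
      simpa [Pi.div_def] using this
    have hF : HasDerivAt (fun t : ℝ => sSup {r : ℝ | (y₀ + t • (vY - κ • y₀)) + r • h ∈ Ω})
        (L (vY - κ • y₀)) ((fun s : ℝ => s / (1 + κ * s)) 0) := by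
      have := hGateaux (vY - κ • y₀) hd0
      simpa using this
    have hcomp := hF.comp 0 hq
    have h2 : HasDerivAt (fun s : ℝ => 1 + κ * s) κ 0 := by
      simpa using ((hasDerivAt_id 0).const_mul κ).const_add 1
    have hmul := h2.mul hcomp
    have hlin : HasDerivAt (fun s : ℝ => t₀ + s * vt) vt 0 := by
      simpa using ((hasDerivAt_id 0).mul_const vt).const_add t₀
    have hfinal := hmul.sub hlin
    have hval : ((fun t : ℝ => sSup {r : ℝ | (y₀ + t • (vY - κ • y₀)) + r • h ∈ Ω}) ∘
        fun s : ℝ => s / (1 + κ * s)) 0 = t₀ := by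
      simp [Function.comp, ht₀]
    rw [hval] at hfinal
    have heq : κ * t₀ + (1 + κ * 0) * (L (vY - κ • y₀) * 1) - vt
        = κ * (t₀ - L y₀) - (vt - L vY) := by
      rw [map_sub, map_smul]
      simp only [smul_eq_mul]
      ring
    rw [heq] at hfinal
    exact hfinal
  have hupper : ∀ κ : ℝ, ∀ᶠ s in 𝓝 (0 : ℝ),
      0 < (1 + κ * s) * sSup {r : ℝ | (y₀ + (s / (1 + κ * s)) • (vY - κ • y₀)) + r • h ∈ Ω}
        - (t₀ + s * vt) →
      gauge Ω ((y₀ + t₀ • h) + s • v) ≤ 1 + κ * s := by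
    intro κ
    have hqcont : ContinuousAt (fun s : ℝ => s / (1 + κ * s)) 0 :=
      ContinuousAt.div (by fun_prop) (by fun_prop) (by norm_num)
    have hE1 : ∀ᶠ s in 𝓝 (0:ℝ), 0 < 1 + κ * s := by
      have hcont : ContinuousAt (fun s : ℝ => 1 + κ * s) 0 := by fun_prop
      have := hcont.eventually_mem (Ioi_mem_nhds (show (0:ℝ) < 1 + κ * 0 by norm_num))
      exact this
    have hE2 : ∀ᶠ s in 𝓝 (0:ℝ), (y₀ + (s / (1 + κ * s)) • (vY - κ • y₀)) + ty • h ∈ Ω := by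
      have hcont : ContinuousAt
          (fun s : ℝ => (y₀ + (s / (1 + κ * s)) • (vY - κ • y₀)) + ty • h) 0 :=
        ((continuousAt_const.add (hqcont.smul continuousAt_const)).add continuousAt_const)
      have hval : (y₀ + ((0:ℝ) / (1 + κ * 0)) • (vY - κ • y₀)) + ty • h ∈ Ω := by
        norm_num; exact hty
      exact hcont.eventually_mem (hΩopen.mem_nhds hval)
    have hE3 : ∀ᶠ s in 𝓝 (0:ℝ), ty < (t₀ + s * vt) / (1 + κ * s) := by
      have hcont : ContinuousAt (fun s : ℝ => (t₀ + s * vt) / (1 + κ * s)) 0 :=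
        ContinuousAt.div (by fun_prop) (by fun_prop) (by norm_num)
      have := hcont.eventually_mem (Ioi_mem_nhds
        (show ty < (t₀ + 0 * vt) / (1 + κ * 0) by norm_num; exact hty_lt))
      filter_upwards [this] with s hs
      exact hs
    filter_upwards [hE1, hE2, hE3] with s h1 h2 h3 hψ
    have hlam : (1 + κ * s) ≠ 0 := ne_of_gt h1
    have hrlt : (t₀ + s * vt) / (1 + κ * s) <
        sSup {r : ℝ | (y₀ + (s / (1 + κ * s)) • (vY - κ • y₀)) + r • h ∈ Ω} := by
      rw [div_lt_iff₀ h1]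
      nlinarith
    obtain ⟨r₁, hr₁mem, hrr₁⟩ := exists_lt_of_lt_csSup ⟨ty, h2⟩ hrlt
    have hrmem : (y₀ + (s / (1 + κ * s)) • (vY - κ • y₀))
        + ((t₀ + s * vt) / (1 + κ * s)) • h ∈ Ω :=
      (hSconv _).ordConnected.out h2 hr₁mem ⟨le_of_lt h3, le_of_lt hrr₁⟩
    refine gauge_le_of_mem (le_of_lt h1) ?_
    rw [Set.mem_smul_set_iff_inv_smul_mem₀ hlam]
    have halg : (1 + κ * s)⁻¹ • ((y₀ + t₀ • h) + s • v)
        = (y₀ + (s / (1 + κ * s)) • (vY - κ • y₀))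
          + ((t₀ + s * vt) / (1 + κ * s)) • h := by
      rw [hvYdef, hvt]
      match_scalars <;> (field_simp; try ring)
    rw [halg]
    exact hrmem
  have hpos : ∀ κ : ℝ, 0 < κ * (t₀ - L y₀) - (vt - L vY) → ∀ᶠ s in 𝓝[>] (0 : ℝ),
      0 < (1 + κ * s) * sSup {r : ℝ | (y₀ + (s / (1 + κ * s)) • (vY - κ • y₀)) + r • h ∈ Ω}
        - (t₀ + s * vt) := by
    intro κ hκ
    set F : ℝ → ℝ := fun s : ℝ =>
      (1 + κ * s) * sSup {r : ℝ | (y₀ + (s / (1 + κ * s)) • (vY - κ • y₀)) + r • h ∈ Ω}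
        - (t₀ + s * vt) with hFdef
    have hz : F 0 = 0 := by
      rw [hFdef]
      norm_num [← ht₀]
    have hslope := hasDerivAt_iff_tendsto_slope.mp (hψder κ)
    have hev := hslope.eventually (eventually_gt_nhds hκ)
    have hmono : 𝓝[>] (0:ℝ) ≤ 𝓝[≠] (0:ℝ) :=
      nhdsWithin_mono 0 fun x hx => Set.mem_compl_singleton_iff.mpr (ne_of_gt hx)
    filter_upwards [hev.filter_mono hmono, eventually_mem_nhdsWithin] with s hs hsmem
    have hsmem' : (0:ℝ) < s := hsmem
    rw [slope_def_field] at hs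
    norm_num [← ht₀, ← hFdef] at hs ⊢
    have h2 := mul_pos hs hsmem'
    rw [div_mul_cancel₀ _ (ne_of_gt hsmem')] at h2
    linarith
  have hneg : ∀ κ : ℝ, κ * (t₀ - L y₀) - (vt - L vY) < 0 → ∀ᶠ s in 𝓝[<] (0 : ℝ),
      0 < (1 + κ * s) * sSup {r : ℝ | (y₀ + (s / (1 + κ * s)) • (vY - κ • y₀)) + r • h ∈ Ω}
        - (t₀ + s * vt) := by
    intro κ hκ
    set F : ℝ → ℝ := fun s : ℝ =>
      (1 + κ * s) * sSup {r : ℝ | (y₀ + (s / (1 + κ * s)) • (vY - κ • y₀)) + r • h ∈ Ω}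
        - (t₀ + s * vt) with hFdef
    have hz : F 0 = 0 := by
      rw [hFdef]
      norm_num [← ht₀]
    have hslope := hasDerivAt_iff_tendsto_slope.mp (hψder κ)
    have hev := hslope.eventually (eventually_lt_nhds hκ)
    have hmono : 𝓝[<] (0:ℝ) ≤ 𝓝[≠] (0:ℝ) :=
      nhdsWithin_mono 0 fun x hx => Set.mem_compl_singleton_iff.mpr (ne_of_lt hx)
    filter_upwards [hev.filter_mono hmono, eventually_mem_nhdsWithin] with s hs hsmem
    have hsmem' : s < 0 := hsmem
    rw [slope_def_field] at hs
    norm_num [← ht₀, ← hFdef] at hs ⊢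
    have h2 := mul_pos_of_neg_of_neg hs hsmem'
    rw [div_mul_cancel₀ _ (ne_of_lt hsmem')] at h2
    linarith
  have hmain : HasDerivAt (fun s : ℝ => gauge Ω ((y₀ + t₀ • h) + s • v))
      ((vt - L vY) / (t₀ - L y₀)) 0 := by
    set c' : ℝ := (vt - L vY) / (t₀ - L y₀) with hc'
    have hc'mul : c' * (t₀ - L y₀) = vt - L vY := div_mul_cancel₀ _ (ne_of_gt hc)
    rw [hasDerivAt_iff_isLittleO, Asymptotics.isLittleO_iff]
    intro ε hε
    have hmp : 0 < (c' + ε) * (t₀ - L y₀) - (vt - L vY) := by nlinarith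
    have hmn : (c' - ε) * (t₀ - L y₀) - (vt - L vY) < 0 := by nlinarith
    have hp := hpos (c' + ε) hmp
    have hn := hneg (c' - ε) hmn
    rw [eventually_nhdsWithin_iff] at hp hn
    have hG0' : gauge Ω ((y₀ + t₀ • h) + (0:ℝ) • v) = 1 := by
      rw [zero_smul, add_zero]; exact hG0
    filter_upwards [hupper (c' + ε), hupper (c' - ε), hp, hn] with s h1 h2 h3 h4
    simp only [hG0', sub_zero, smul_eq_mul, Real.norm_eq_abs]
    have hlb := hlow s
    rcases lt_trichotomy s 0 with hs | hs | hs
    · have hub := h2 (h4 hs)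
      have e1 : (c' - ε) * s = c' * s - ε * s := by ring
      have e2 : s * c' = c' * s := by ring
      rw [abs_of_nonneg (by linarith), abs_of_neg hs]
      linarith
    · subst hs
      simp [hG0]
    · have hub := h1 (h3 hs)
      have e1 : (c' + ε) * s = c' * s + ε * s := by ring
      have e2 : s * c' = c' * s := by ring
      rw [abs_of_nonneg (by linarith), abs_of_pos hs]
      linarith
  have : (-(L vY) + vt) / (-(L y₀) + t₀) = (vt - L vY) / (t₀ - L y₀) := by ring
  rw [this]
  exact hmain
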